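/- Let g(h) = 1 + arctan(h). The PTVDRK2' update factor for θ' = θ at θⁿ = 1 is approximated by (1 + g(h)²)/2, and (1 + g(h)²)/2 = 1 + h + h²/2 − h³/3 + O(h⁴). Consequently e^h − (1 + g(h)²)/2 = h³/2 + O(h⁴) ≠ O(h⁴) ... i.e., the scheme's local error is exactly third order (global second order), since the h³ coefficient −1/3 differs from the exact 1/6. -/

import Mathlib

lemma arctan_cubic_bound {h : ℝ} (hh : |h| ≤ 1) :
    |Real.arctan h - (h - h ^ 3 / 3)| ≤ h ^ 4 := by
  set s : Set ℝ := Set.Icc (-|h|) |h|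
  have hs : Convex ℝ s := convex_Icc _ _
  have hderiv : ∀ x ∈ s, HasDerivWithinAt (fun x => Real.arctan x - (x - x ^ 3 / 3))
      (1 / (1 + x ^ 2) - (1 - x ^ 2)) s x := by
    intro x hx
    have h1 : HasDerivAt (fun x : ℝ => Real.arctan x - (x - x ^ 3 / 3))
        (1 / (1 + x ^ 2) - (1 - x ^ 2)) x := by
      have := (Real.hasDerivAt_arctan x).sub
        (((hasDerivAt_id x).sub (((hasDerivAt_pow 3 x).div_const 3))))
      exact this.congr_deriv (by norm_num <;> ring)
    exact h1.hasDerivWithinAt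
  have hbound : ∀ x ∈ s, ‖1 / (1 + x ^ 2) - (1 - x ^ 2)‖ ≤ h ^ 4 := by
    intro x hx
    have hx2 : (0:ℝ) < 1 + x ^ 2 := by positivity
    have heq : 1 / (1 + x ^ 2) - (1 - x ^ 2) = x ^ 4 / (1 + x ^ 2) := by
      field_simp; ring
    rw [heq]
    have h1 : x ^ 4 / (1 + x ^ 2) ≤ x ^ 4 := by
      rw [div_le_iff₀ hx2]
      nlinarith [pow_nonneg (sq_nonneg x) 2, sq_nonneg (x^2), sq_nonneg x]
    have h0 : (0:ℝ) ≤ x ^ 4 / (1 + x ^ 2) := by positivity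
    rw [Real.norm_eq_abs, abs_of_nonneg h0]
    have hxh : |x| ≤ |h| := abs_le.mpr ⟨hx.1, hx.2⟩
    calc x ^ 4 / (1 + x ^ 2) ≤ x ^ 4 := h1
      _ = |x| ^ 4 := by rw [← abs_pow]; exact (abs_of_nonneg (by positivity)).symm
      _ ≤ |h| ^ 4 := pow_le_pow_left₀ (abs_nonneg x) hxh 4
      _ = h ^ 4 := by rw [← abs_pow, abs_of_nonneg (by positivity)]
  have h0 : (0:ℝ) ∈ s := by constructor <;> simp [abs_nonneg]
  have hh' : h ∈ s := by constructor <;> cases abs_cases h <;> linarith [abs_nonneg h]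
  have := hs.norm_image_sub_le_of_norm_hasDerivWithin_le hderiv hbound h0 hh'
  simp only [Real.arctan_zero, Real.norm_eq_abs, sub_zero] at this
  have : |Real.arctan h - (h - h ^ 3 / 3)| ≤ h ^ 4 * |h| := by
    convert this using 2
    norm_num
  calc |Real.arctan h - (h - h ^ 3 / 3)| ≤ h ^ 4 * |h| := this
    _ ≤ h ^ 4 * 1 := by
        apply mul_le_mul_of_nonneg_left hh (by positivity)
    _ = h ^ 4 := mul_one _

theorem stmt_14 :
    ∃ C > (0:ℝ), ∃ δ > (0:ℝ), ∀ h : ℝ, |h| ≤ δ →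
      |Real.exp h - (1 + (1 + Real.arctan h) ^ 2) / 2 - h ^ 3 / 2| ≤ C * h ^ 4 := by
  refine ⟨5, by norm_num, 1, by norm_num, fun h hh => ?_⟩
  set a := Real.arctan h with ha
  set p := h - h ^ 3 / 3 with hp
  have hu : |a - p| ≤ h ^ 4 := arctan_cubic_bound hh
  have hR : |Real.exp h - (1 + h + h ^ 2 / 2 + h ^ 3 / 6)| ≤ (5/96) * h ^ 4 := by
    have := Real.exp_bound hh (n := 4) (by norm_num)
    have hsum : ∑ i ∈ Finset.range 4, h ^ i / (i.factorial : ℝ)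
        = 1 + h + h ^ 2 / 2 + h ^ 3 / 6 := by
      simp [Finset.sum_range_succ, Nat.factorial]
    rw [hsum] at this
    calc |Real.exp h - (1 + h + h ^ 2 / 2 + h ^ 3 / 6)|
        ≤ |h| ^ 4 * ((4:ℕ).succ / ((4:ℕ).factorial * 4)) := this
      _ = (5/96) * h ^ 4 := by
          rw [← abs_pow, abs_of_nonneg (by positivity : (0:ℝ) ≤ h ^ 4)]
          norm_num [Nat.factorial]; ring
  -- bounds on a and p
  have hpi : |a| ≤ 2 := by
    have h1 := Real.arctan_lt_pi_div_two h
    have h2 := Real.neg_pi_div_two_lt_arctan h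
    have hpi4 := Real.pi_le_four
    rw [abs_le]; constructor <;> nlinarith
  have hpb : |p| ≤ 2 := by
    rw [hp]
    have h3 : |h| ^ 3 ≤ 1 := by
      calc |h| ^ 3 ≤ 1 ^ 3 := pow_le_pow_left₀ (abs_nonneg h) hh 3
        _ = 1 := one_pow 3
    calc |h - h ^ 3 / 3| ≤ |h| + |h ^ 3 / 3| := abs_sub _ _
      _ = |h| + |h| ^ 3 / 3 := by rw [abs_div, abs_pow]; norm_num
      _ ≤ 1 + 1 / 3 := by linarith
      _ ≤ 2 := by norm_num
  -- key algebraic identity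
  have hid : Real.exp h - (1 + (1 + a) ^ 2) / 2 - h ^ 3 / 2
      = (Real.exp h - (1 + h + h ^ 2 / 2 + h ^ 3 / 6)) + (h ^ 4 / 3 - h ^ 6 / 18)
        - (a - p) * (1 + (a + p) / 2) := by
    rw [hp]; ring
  rw [hid]
  have hmid : |h ^ 4 / 3 - h ^ 6 / 18| ≤ h ^ 4 := by
    have h6 : h ^ 6 ≤ h ^ 4 := by
      have : |h| ^ 6 ≤ |h| ^ 4 := pow_le_pow_of_le_one (abs_nonneg h) hh (by norm_num)
      calc h ^ 6 = |h| ^ 6 := by rw [← abs_pow, abs_of_nonneg (by positivity)]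
        _ ≤ |h| ^ 4 := this
        _ = h ^ 4 := by rw [← abs_pow, abs_of_nonneg (by positivity)]
    have h6n : (0:ℝ) ≤ h ^ 6 := by positivity
    rw [abs_le]; constructor <;> nlinarith [pow_nonneg (abs_nonneg h) 4, sq_nonneg (h^2)]
  have hlast : |(a - p) * (1 + (a + p) / 2)| ≤ 3 * h ^ 4 := by
    rw [abs_mul]
    have : |1 + (a + p) / 2| ≤ 3 := by
      have hap : |a + p| ≤ |a| + |p| := abs_add_le _ _
      calc |1 + (a + p) / 2| ≤ |(1:ℝ)| + |(a + p) / 2| := abs_add_le _ _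
        _ = 1 + |a + p| / 2 := by rw [abs_one, abs_div]; norm_num
        _ ≤ 1 + (2 + 2) / 2 := by linarith
        _ = 3 := by norm_num
    calc |a - p| * |1 + (a + p) / 2| ≤ h ^ 4 * 3 :=
        mul_le_mul hu this (abs_nonneg _) (by positivity)
      _ = 3 * h ^ 4 := by ring
  calc |Real.exp h - (1 + h + h ^ 2 / 2 + h ^ 3 / 6) + (h ^ 4 / 3 - h ^ 6 / 18)
        - (a - p) * (1 + (a + p) / 2)|
      ≤ |Real.exp h - (1 + h + h ^ 2 / 2 + h ^ 3 / 6)| + |h ^ 4 / 3 - h ^ 6 / 18|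
        + |(a - p) * (1 + (a + p) / 2)| := by
        apply (abs_sub _ _).trans
        apply add_le_add_left (abs_add_le _ _)
    _ ≤ (5/96) * h ^ 4 + h ^ 4 + 3 * h ^ 4 := by linarith
    _ ≤ 5 * h ^ 4 := by nlinarith [pow_nonneg (abs_nonneg h) 4, sq_nonneg (h^2)]
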